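/- Let R be a commutative ring, let f, g ∈ R[x₁, …, xₙ], let I be the ideal of R[x₁, …, xₙ] generated by the partial derivatives ∂₁g, …, ∂ₙg, and suppose f − g ∈ I². Then there exists a matrix of polynomials (A_{kl})_{1 ≤ k,l ≤ n} with entries in R[x₁, …, xₙ] such that for every i, the polynomial ∂ᵢf − ∂ᵢg − Σ_{k,l} (∂ᵢ∂ₖg) · A_{kl} · (∂ₗg) lies in I². In other words, df ≡ dg + H_g · A · dg modulo I², where H_g is the Hessian matrix of g. -/

import Mathlib

open MvPolynomial

/-- If `f - g ∈ I²` where `I = (∂₁g, …, ∂ₙg)`, then there is a matrix `A` of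
polynomials with `df ≡ dg + H_g · A · dg (mod I²)`, i.e.
`∂ᵢf - ∂ᵢg - ∑ₖₗ (∂ᵢ∂ₖg) Aₖₗ (∂ₗg) ∈ I²` for all `i`. -/
theorem exists_matrix_df_eq_dg_add_hessian_mul
    {R : Type*} [CommRing R] {n : ℕ}
    (f g : MvPolynomial (Fin n) R)
    (I : Ideal (MvPolynomial (Fin n) R))
    (hI : I = Ideal.span (Set.range fun i => pderiv i g))
    (hfg : f - g ∈ I ^ 2) :
    ∃ A : Fin n → Fin n → MvPolynomial (Fin n) R,
      ∀ i : Fin n,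
        pderiv i f - pderiv i g -
          ∑ k, ∑ l, pderiv i (pderiv k g) * A k l * pderiv l g ∈ I ^ 2 := by
  classical
  set v : Fin n → MvPolynomial (Fin n) R := fun i => pderiv i g with hv
  have hI2 : I ^ 2 =
      Ideal.span (Set.range fun p : Fin n × Fin n => v p.1 * v p.2) := by
    rw [hI, sq, Ideal.span_mul_span]
    congr 1
    ext x
    constructor
    · intro hx
      rw [Set.mem_mul] at hx
      obtain ⟨a, ⟨i, rfl⟩, b, ⟨j, rfl⟩, hx⟩ := hx
      rw [eq_comm] at hx
      exact ⟨(i, j), hx.symm⟩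
    · rintro ⟨⟨i, j⟩, rfl⟩
      rw [Set.mem_mul]
      exact ⟨v i, ⟨i, rfl⟩, v j, ⟨j, rfl⟩, rfl⟩
  rw [hI2] at hfg
  obtain ⟨c, hc⟩ := (Submodule.mem_span_range_iff_exists_fun _).mp hfg
  simp only [smul_eq_mul] at hc
  refine ⟨fun k l => c (k, l) + c (l, k), fun i => ?_⟩
  have hderiv : pderiv i f - pderiv i g =
      ∑ p : Fin n × Fin n, (pderiv i (c p) * (v p.1 * v p.2)
        + c p * (pderiv i (v p.1) * v p.2 + v p.1 * pderiv i (v p.2))) := by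
    have h := congrArg (pderiv i) hc
    rw [map_sub] at h
    rw [← h, map_sum]
    refine Finset.sum_congr rfl fun p _ => ?_
    simp only [pderiv_mul]
    try ring
  have hswap : ∑ p : Fin n × Fin n, pderiv i (v p.1) * c (p.2, p.1) * v p.2
      = ∑ p : Fin n × Fin n, c p * (v p.1 * pderiv i (v p.2)) := by
    refine Fintype.sum_equiv (Equiv.prodComm (Fin n) (Fin n)) _ _ fun p => ?_
    simp only [Equiv.prodComm_apply, Prod.swap]
    ring
  have key : pderiv i f - pderiv i g -
      ∑ k, ∑ l, pderiv i (pderiv k g) * (c (k, l) + c (l, k)) * pderiv l g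
      = ∑ p : Fin n × Fin n, pderiv i (c p) * (v p.1 * v p.2) := by
    have hprod : (∑ k, ∑ l,
        pderiv i (pderiv k g) * (c (k, l) + c (l, k)) * pderiv l g)
        = ∑ p : Fin n × Fin n,
            (pderiv i (v p.1) * c p * v p.2
              + pderiv i (v p.1) * c (p.2, p.1) * v p.2) := by
      rw [Fintype.sum_prod_type]
      refine Finset.sum_congr rfl fun k _ => Finset.sum_congr rfl fun l _ => ?_
      simp only [hv]
      ring
    have h2 : ∑ p : Fin n × Fin n,
        c p * (pderiv i (v p.1) * v p.2 + v p.1 * pderiv i (v p.2))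
        = (∑ p : Fin n × Fin n, pderiv i (v p.1) * c p * v p.2)
          + ∑ p : Fin n × Fin n, c p * (v p.1 * pderiv i (v p.2)) := by
      rw [← Finset.sum_add_distrib]
      exact Finset.sum_congr rfl fun p _ => by ring
    rw [hderiv, Finset.sum_add_distrib, h2, hprod, Finset.sum_add_distrib, hswap]
    ring
  rw [hI2, key]
  refine Submodule.sum_mem _ fun p _ => ?_
  exact Ideal.mul_mem_left _ _ (Ideal.subset_span ⟨p, rfl⟩)
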